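/- For each ε ∈ {−1, 0, 1}, the function F(x,y,y₁,y₂,y₃,y₄) = 5y₄²/(3y₃) + ε·y₃^{5/3}, which is smooth on the open set U = {(x,y,y₁,y₂,y₃,y₄) ∈ ℝ⁶ : y₃ > 0}, satisfies the three Wünschmann conditions (W1), (W2), (W3) at every point of U. -/

import Mathlib

/-- Partial derivative of `G : ℝ⁶ → ℝ` in the `i`-th coordinate direction.
Coordinates: `p 0 = x`, `p 1 = y`, `p 2 = y₁`, `p 3 = y₂`, `p 4 = y₃`, `p 5 = y₄`. -/
noncomputable def pd (i : Fin 6) (G : (Fin 6 → ℝ) → ℝ) (p : Fin 6 → ℝ) : ℝ :=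
  fderiv ℝ G p (Pi.single i 1)

/-- The total derivative `𝒟G = Gₓ + y₁G_y + y₂G_{y₁} + y₃G_{y₂} + y₄G_{y₃} + F·G_{y₄}`. -/
noncomputable def Dt (F G : (Fin 6 → ℝ) → ℝ) : (Fin 6 → ℝ) → ℝ := fun p =>
  pd 0 G p + p 2 * pd 1 G p + p 3 * pd 2 G p + p 4 * pd 3 G p + p 5 * pd 4 G p
    + F p * pd 5 G p

/-- First Wünschmann condition:
`50𝒟²F₄ − 75𝒟F₃ + 50F₂ − 60F₄𝒟F₄ + 30F₃F₄ + 8F₄³ = 0`. -/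
def Wuensch1 (F : (Fin 6 → ℝ) → ℝ) (p : Fin 6 → ℝ) : Prop :=
  50 * Dt F (Dt F (pd 5 F)) p - 75 * Dt F (pd 4 F) p + 50 * pd 3 F p
    - 60 * pd 5 F p * Dt F (pd 5 F) p + 30 * pd 4 F p * pd 5 F p
    + 8 * (pd 5 F p) ^ 3 = 0

/-- Second Wünschmann condition:
`375𝒟²F₃ − 1000𝒟F₂ + 350(𝒟F₄)² + 1250F₁ − 650F₃𝒟F₄ + 200F₃² − 150F₄𝒟F₃ + 200F₂F₄`
`− 140F₄²𝒟F₄ + 130F₃F₄² + 14F₄⁴ = 0`. -/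
def Wuensch2 (F : (Fin 6 → ℝ) → ℝ) (p : Fin 6 → ℝ) : Prop :=
  375 * Dt F (Dt F (pd 4 F)) p - 1000 * Dt F (pd 3 F) p + 350 * (Dt F (pd 5 F) p) ^ 2
    + 1250 * pd 2 F p - 650 * pd 4 F p * Dt F (pd 5 F) p + 200 * (pd 4 F p) ^ 2
    - 150 * pd 5 F p * Dt F (pd 4 F) p + 200 * pd 3 F p * pd 5 F p
    - 140 * (pd 5 F p) ^ 2 * Dt F (pd 5 F) p + 130 * pd 4 F p * (pd 5 F p) ^ 2
    + 14 * (pd 5 F p) ^ 4 = 0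

/-- Third Wünschmann condition:
`1250𝒟²F₂ − 6250𝒟F₁ + 1750(𝒟F₃)(𝒟F₄) − 2750F₂𝒟F₄ − 875F₃𝒟F₃ + 1250F₂F₃ − 500F₄𝒟F₂`
`+ 700F₄(𝒟F₄)² + 1250F₁F₄ − 1050F₃F₄𝒟F₄ + 350F₃²F₄ − 350F₄²𝒟F₃ + 550F₂F₄²`
`− 280F₄³𝒟F₄ + 210F₃F₄³ + 28F₄⁵ + 18750F_y = 0`. -/
def Wuensch3 (F : (Fin 6 → ℝ) → ℝ) (p : Fin 6 → ℝ) : Prop :=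
  1250 * Dt F (Dt F (pd 3 F)) p - 6250 * Dt F (pd 2 F) p
    + 1750 * Dt F (pd 4 F) p * Dt F (pd 5 F) p - 2750 * pd 3 F p * Dt F (pd 5 F) p
    - 875 * pd 4 F p * Dt F (pd 4 F) p + 1250 * pd 3 F p * pd 4 F p
    - 500 * pd 5 F p * Dt F (pd 3 F) p + 700 * pd 5 F p * (Dt F (pd 5 F) p) ^ 2
    + 1250 * pd 2 F p * pd 5 F p - 1050 * pd 4 F p * pd 5 F p * Dt F (pd 5 F) p
    + 350 * (pd 4 F p) ^ 2 * pd 5 F p - 350 * (pd 5 F p) ^ 2 * Dt F (pd 4 F) p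
    + 550 * pd 3 F p * (pd 5 F p) ^ 2 - 280 * (pd 5 F p) ^ 3 * Dt F (pd 5 F) p
    + 210 * pd 4 F p * (pd 5 F p) ^ 3 + 28 * (pd 5 F p) ^ 5
    + 18750 * pd 1 F p = 0

/-- The defining function `F = 5y₄²/(3y₃) + ε·y₃^{5/3}`. -/
noncomputable def Feps (ε : ℝ) : (Fin 6 → ℝ) → ℝ := fun p =>
  5 * (p 5) ^ 2 / (3 * p 4) + ε * (p 4) ^ ((5 : ℝ) / 3)

namespace Aux13

noncomputable def tm (c1 : ℝ) (m1 : ℕ) (r1 c2 : ℝ) (m2 : ℕ) (r2 : ℝ) : (Fin 6 → ℝ) → ℝ :=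
  fun q => c1 * q 5 ^ m1 * q 4 ^ r1 + c2 * q 5 ^ m2 * q 4 ^ r2

lemma mono_hasFDerivAt (c : ℝ) (m : ℕ) (r : ℝ) (q : Fin 6 → ℝ) (h : q 4 ≠ 0) :
    HasFDerivAt (fun q : Fin 6 → ℝ => c * q 5 ^ m * q 4 ^ r)
      ((c * q 5 ^ m * (r * q 4 ^ (r - 1))) •
          ContinuousLinearMap.proj (R := ℝ) (φ := fun _ : Fin 6 => ℝ) 4 +
       (c * m * q 5 ^ (m - 1) * q 4 ^ r) •
          ContinuousLinearMap.proj (R := ℝ) (φ := fun _ : Fin 6 => ℝ) 5) q := by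
  have h5 : HasFDerivAt (fun q : Fin 6 → ℝ => q 5)
      (ContinuousLinearMap.proj (R := ℝ) (φ := fun _ : Fin 6 => ℝ) 5) q :=
    (ContinuousLinearMap.proj (R := ℝ) (φ := fun _ : Fin 6 => ℝ) 5).hasFDerivAt
  have h4 : HasFDerivAt (fun q : Fin 6 → ℝ => q 4)
      (ContinuousLinearMap.proj (R := ℝ) (φ := fun _ : Fin 6 => ℝ) 4) q :=
    (ContinuousLinearMap.proj (R := ℝ) (φ := fun _ : Fin 6 => ℝ) 4).hasFDerivAt
  have h5p : HasFDerivAt (fun q : Fin 6 → ℝ => q 5 ^ m)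
      (((m : ℝ) * q 5 ^ (m - 1)) •
        ContinuousLinearMap.proj (R := ℝ) (φ := fun _ : Fin 6 => ℝ) 5) q := by
    simpa [Function.comp_def] using (hasDerivAt_pow m (q 5)).comp_hasFDerivAt q h5
  have h4r : HasFDerivAt (fun q : Fin 6 → ℝ => q 4 ^ r)
      ((r * q 4 ^ (r - 1)) •
        ContinuousLinearMap.proj (R := ℝ) (φ := fun _ : Fin 6 => ℝ) 4) q := by
    simpa [Function.comp_def] using
      (Real.hasDerivAt_rpow_const (Or.inl h)).comp_hasFDerivAt q h4
  have key := (h5p.mul h4r).const_mul c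
  have hfun : (fun q : Fin 6 → ℝ => c * q 5 ^ m * q 4 ^ r)
      = fun q : Fin 6 → ℝ => c * (q 5 ^ m * q 4 ^ r) := by funext x; ring
  rw [hfun]
  refine key.congr_fderiv ?_
  ext v
  simp [ContinuousLinearMap.proj_apply, smul_smul]
  ring

lemma tm_hasFDerivAt (c1 : ℝ) (m1 : ℕ) (r1 c2 : ℝ) (m2 : ℕ) (r2 : ℝ)
    (q : Fin 6 → ℝ) (h : q 4 ≠ 0) :
    HasFDerivAt (tm c1 m1 r1 c2 m2 r2)
      (((c1 * q 5 ^ m1 * (r1 * q 4 ^ (r1 - 1)) + c2 * q 5 ^ m2 * (r2 * q 4 ^ (r2 - 1))) •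
          ContinuousLinearMap.proj (R := ℝ) (φ := fun _ : Fin 6 => ℝ) 4) +
       ((c1 * m1 * q 5 ^ (m1 - 1) * q 4 ^ r1 + c2 * m2 * q 5 ^ (m2 - 1) * q 4 ^ r2) •
          ContinuousLinearMap.proj (R := ℝ) (φ := fun _ : Fin 6 => ℝ) 5)) q := by
  have key := (mono_hasFDerivAt c1 m1 r1 q h).add (mono_hasFDerivAt c2 m2 r2 q h)
  refine key.congr_fderiv ?_
  ext v
  simp [ContinuousLinearMap.proj_apply]
  ring

lemma tm_pd (c1 : ℝ) (m1 : ℕ) (r1 c2 : ℝ) (m2 : ℕ) (r2 : ℝ)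
    (i : Fin 6) (q : Fin 6 → ℝ) (h : 0 < q 4) :
    pd i (tm c1 m1 r1 c2 m2 r2) q =
      (c1 * q 5 ^ m1 * (r1 * q 4 ^ (r1 - 1)) + c2 * q 5 ^ m2 * (r2 * q 4 ^ (r2 - 1)))
          * (Pi.single i 1 : Fin 6 → ℝ) 4
      + (c1 * m1 * q 5 ^ (m1 - 1) * q 4 ^ r1 + c2 * m2 * q 5 ^ (m2 - 1) * q 4 ^ r2)
          * (Pi.single i 1 : Fin 6 → ℝ) 5 := by
  unfold pd
  rw [(tm_hasFDerivAt c1 m1 r1 c2 m2 r2 q h.ne').fderiv]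
  simp [ContinuousLinearMap.proj_apply]

lemma pd_congr {G G' : (Fin 6 → ℝ) → ℝ} (h : ∀ q, 0 < q 4 → G q = G' q)
    {q : Fin 6 → ℝ} (hq : 0 < q 4) (i : Fin 6) : pd i G q = pd i G' q := by
  have hopen : IsOpen {x : Fin 6 → ℝ | 0 < x 4} :=
    isOpen_lt continuous_const (continuous_apply 4)
  have hev : G =ᶠ[nhds q] G' :=
    Filter.eventuallyEq_of_mem (hopen.mem_nhds hq) h
  unfold pd
  rw [Filter.EventuallyEq.fderiv_eq hev]

lemma pd4_of {G : (Fin 6 → ℝ) → ℝ} {c1 : ℝ} {m1 : ℕ} {r1 c2 : ℝ} {m2 : ℕ} {r2 : ℝ}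
    (hG : ∀ q, 0 < q 4 → G q = tm c1 m1 r1 c2 m2 r2 q) {q : Fin 6 → ℝ} (hq : 0 < q 4) :
    pd 4 G q = c1 * q 5 ^ m1 * (r1 * q 4 ^ (r1 - 1))
      + c2 * q 5 ^ m2 * (r2 * q 4 ^ (r2 - 1)) := by
  rw [pd_congr hG hq 4, tm_pd c1 m1 r1 c2 m2 r2 4 q hq,
    Pi.single_eq_same, Pi.single_eq_of_ne (by decide : (5 : Fin 6) ≠ 4)]
  ring

lemma pd5_of {G : (Fin 6 → ℝ) → ℝ} {c1 : ℝ} {m1 : ℕ} {r1 c2 : ℝ} {m2 : ℕ} {r2 : ℝ}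
    (hG : ∀ q, 0 < q 4 → G q = tm c1 m1 r1 c2 m2 r2 q) {q : Fin 6 → ℝ} (hq : 0 < q 4) :
    pd 5 G q = c1 * m1 * q 5 ^ (m1 - 1) * q 4 ^ r1
      + c2 * m2 * q 5 ^ (m2 - 1) * q 4 ^ r2 := by
  rw [pd_congr hG hq 5, tm_pd c1 m1 r1 c2 m2 r2 5 q hq,
    Pi.single_eq_same, Pi.single_eq_of_ne (by decide : (4 : Fin 6) ≠ 5)]
  ring

lemma pdlo_of {G : (Fin 6 → ℝ) → ℝ} {c1 : ℝ} {m1 : ℕ} {r1 c2 : ℝ} {m2 : ℕ} {r2 : ℝ}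
    (hG : ∀ q, 0 < q 4 → G q = tm c1 m1 r1 c2 m2 r2 q) {q : Fin 6 → ℝ} (hq : 0 < q 4)
    (i : Fin 6) (h4 : i ≠ 4) (h5 : i ≠ 5) : pd i G q = 0 := by
  rw [pd_congr hG hq i, tm_pd c1 m1 r1 c2 m2 r2 i q hq]
  rw [Pi.single_eq_of_ne (Ne.symm h4), Pi.single_eq_of_ne (Ne.symm h5)]
  ring

lemma Dt_tm (F G : (Fin 6 → ℝ) → ℝ) (c1 : ℝ) (m1 : ℕ) (r1 c2 : ℝ) (m2 : ℕ) (r2 : ℝ)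
    (hG : ∀ q, 0 < q 4 → G q = tm c1 m1 r1 c2 m2 r2 q) (q : Fin 6 → ℝ) (hq : 0 < q 4) :
    Dt F G q =
      q 5 * (c1 * q 5 ^ m1 * (r1 * q 4 ^ (r1 - 1)) + c2 * q 5 ^ m2 * (r2 * q 4 ^ (r2 - 1)))
      + F q * (c1 * m1 * q 5 ^ (m1 - 1) * q 4 ^ r1
          + c2 * m2 * q 5 ^ (m2 - 1) * q 4 ^ r2) := by
  show pd 0 G q + q 2 * pd 1 G q + q 3 * pd 2 G q + q 4 * pd 3 G q + q 5 * pd 4 G q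
      + F q * pd 5 G q = _
  rw [pdlo_of hG hq 0 (by decide) (by decide), pdlo_of hG hq 1 (by decide) (by decide),
    pdlo_of hG hq 2 (by decide) (by decide), pdlo_of hG hq 3 (by decide) (by decide),
    pd4_of hG hq, pd5_of hG hq]
  ring

lemma rpow_n3 {a : ℝ} (ha : 0 < a) (n : ℕ) : a ^ ((n : ℝ)/3) = (a ^ ((1:ℝ)/3)) ^ n := by
  rw [← Real.rpow_natCast (a ^ ((1:ℝ)/3)) n, ← Real.rpow_mul ha.le]
  congr 1; ring

lemma rpow_neg_n3 {a : ℝ} (ha : 0 < a) (n : ℕ) :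
    a ^ (-((n : ℝ)/3)) = ((a ^ ((1:ℝ)/3)) ^ n)⁻¹ := by
  rw [Real.rpow_neg ha.le, rpow_n3 ha]

lemma E1 {a : ℝ} (ha : 0 < a) : a ^ (-1 : ℝ) = ((a ^ ((1:ℝ)/3)) ^ 3)⁻¹ := by
  rw [show (-1 : ℝ) = -(((3:ℕ):ℝ)/3) by push_cast; norm_num, rpow_neg_n3 ha]
lemma E2 {a : ℝ} (ha : 0 < a) : a ^ (-2 : ℝ) = ((a ^ ((1:ℝ)/3)) ^ 6)⁻¹ := by
  rw [show (-2 : ℝ) = -(((6:ℕ):ℝ)/3) by push_cast; norm_num, rpow_neg_n3 ha]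
lemma E3 {a : ℝ} (ha : 0 < a) : a ^ (-3 : ℝ) = ((a ^ ((1:ℝ)/3)) ^ 9)⁻¹ := by
  rw [show (-3 : ℝ) = -(((9:ℕ):ℝ)/3) by push_cast; norm_num, rpow_neg_n3 ha]
lemma E11 {a : ℝ} (ha : 0 < a) : a ^ ((-1 : ℝ) - 1) = ((a ^ ((1:ℝ)/3)) ^ 6)⁻¹ := by
  rw [show ((-1 : ℝ) - 1) = -(((6:ℕ):ℝ)/3) by push_cast; norm_num, rpow_neg_n3 ha]
lemma E21 {a : ℝ} (ha : 0 < a) : a ^ ((-2 : ℝ) - 1) = ((a ^ ((1:ℝ)/3)) ^ 9)⁻¹ := by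
  rw [show ((-2 : ℝ) - 1) = -(((9:ℕ):ℝ)/3) by push_cast; norm_num, rpow_neg_n3 ha]
lemma E31 {a : ℝ} (ha : 0 < a) : a ^ ((-3 : ℝ) - 1) = ((a ^ ((1:ℝ)/3)) ^ 12)⁻¹ := by
  rw [show ((-3 : ℝ) - 1) = -(((12:ℕ):ℝ)/3) by push_cast; norm_num, rpow_neg_n3 ha]
lemma E53 {a : ℝ} (ha : 0 < a) : a ^ ((5:ℝ)/3) = (a ^ ((1:ℝ)/3)) ^ 5 := by
  rw [show ((5:ℝ)/3) = (((5:ℕ):ℝ)/3) by push_cast; norm_num, rpow_n3 ha]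
lemma E23 {a : ℝ} (ha : 0 < a) : a ^ ((2:ℝ)/3) = (a ^ ((1:ℝ)/3)) ^ 2 := by
  rw [show ((2:ℝ)/3) = (((2:ℕ):ℝ)/3) by push_cast; norm_num, rpow_n3 ha]
lemma E531 {a : ℝ} (ha : 0 < a) : a ^ ((5:ℝ)/3 - 1) = (a ^ ((1:ℝ)/3)) ^ 2 := by
  rw [show ((5:ℝ)/3 - 1) = (((2:ℕ):ℝ)/3) by push_cast; norm_num, rpow_n3 ha]
lemma E231 {a : ℝ} (ha : 0 < a) : a ^ ((2:ℝ)/3 - 1) = (a ^ ((1:ℝ)/3))⁻¹ := by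
  rw [show ((2:ℝ)/3 - 1) = -(((1:ℕ):ℝ)/3) by push_cast; norm_num, rpow_neg_n3 ha, pow_one]
lemma Em13 {a : ℝ} (ha : 0 < a) : a ^ (-1/3 : ℝ) = (a ^ ((1:ℝ)/3))⁻¹ := by
  rw [show (-1/3 : ℝ) = -(((1:ℕ):ℝ)/3) by push_cast; norm_num, rpow_neg_n3 ha, pow_one]
lemma Em131 {a : ℝ} (ha : 0 < a) : a ^ ((-1/3 : ℝ) - 1) = ((a ^ ((1:ℝ)/3)) ^ 4)⁻¹ := by
  rw [show ((-1/3 : ℝ) - 1) = -(((4:ℕ):ℝ)/3) by push_cast; norm_num, rpow_neg_n3 ha]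

end Aux13


set_option maxHeartbeats 2000000 in
/-- For `ε ∈ {−1,0,1}` the ODE `y⁽⁵⁾ = 5y₄²/(3y₃) + ε·y₃^{5/3}` satisfies the three
Wünschmann conditions at every point with `y₃ > 0`. -/
theorem stmt13 (ε : ℝ) (hε : ε = -1 ∨ ε = 0 ∨ ε = 1) (p : Fin 6 → ℝ)
    (hp : 0 < p 4) :
    Wuensch1 (Feps ε) p ∧ Wuensch2 (Feps ε) p ∧ Wuensch3 (Feps ε) p := by
  classical
  have hFeq : ∀ q : Fin 6 → ℝ, 0 < q 4 →
      Feps ε q = Aux13.tm (5/3) 2 (-1) ε 0 (5/3) q := by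
    intro q hq
    simp only [Feps, Aux13.tm, Real.rpow_neg_one, pow_zero]
    field_simp
  have h5eq : ∀ q : Fin 6 → ℝ, 0 < q 4 →
      pd 5 (Feps ε) q = Aux13.tm (10/3) 1 (-1) 0 0 0 q := by
    intro q hq
    rw [Aux13.pd5_of hFeq hq]
    simp only [Aux13.tm]
    norm_num
  have h4eq : ∀ q : Fin 6 → ℝ, 0 < q 4 →
      pd 4 (Feps ε) q = Aux13.tm (-5/3) 2 (-2) (5/3*ε) 0 (2/3) q := by
    intro q hq
    rw [Aux13.pd4_of hFeq hq]
    simp only [Aux13.tm]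
    rw [Aux13.E11 hq, Aux13.E531 hq, Aux13.E2 hq, Aux13.E23 hq]
    norm_num
    ring
  have h3eq : ∀ q : Fin 6 → ℝ, 0 < q 4 →
      pd 3 (Feps ε) q = Aux13.tm 0 0 0 0 0 0 q := by
    intro q hq
    rw [Aux13.pdlo_of hFeq hq 3 (by decide) (by decide)]
    simp [Aux13.tm]
  have hDF4eq : ∀ q : Fin 6 → ℝ, 0 < q 4 →
      Dt (Feps ε) (pd 5 (Feps ε)) q = Aux13.tm (20/9) 2 (-2) (10/3*ε) 0 (2/3) q := by
    intro q hq
    have hs : (0:ℝ) < q 4 ^ ((1:ℝ)/3) := Real.rpow_pos_of_pos hq _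
    rw [Aux13.Dt_tm (Feps ε) _ _ _ _ _ _ _ h5eq q hq, hFeq q hq]
    simp only [Aux13.tm]
    rw [Aux13.E11 hq, Aux13.E1 hq, Aux13.E53 hq, Aux13.E2 hq, Aux13.E23 hq]
    field_simp
    ring
  have hDF3eq : ∀ q : Fin 6 → ℝ, 0 < q 4 →
      Dt (Feps ε) (pd 4 (Feps ε)) q
        = Aux13.tm (-20/9) 3 (-3) (-20/9*ε) 1 (-1/3) q := by
    intro q hq
    have hs : (0:ℝ) < q 4 ^ ((1:ℝ)/3) := Real.rpow_pos_of_pos hq _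
    rw [Aux13.Dt_tm (Feps ε) _ _ _ _ _ _ _ h4eq q hq, hFeq q hq]
    simp only [Aux13.tm]
    rw [Aux13.E21 hq, Aux13.E231 hq, Aux13.E1 hq, Aux13.E53 hq, Aux13.E2 hq,
      Aux13.E23 hq, Aux13.E3 hq, Aux13.Em13 hq]
    field_simp
    ring
  have hD3z : ∀ q : Fin 6 → ℝ, 0 < q 4 →
      Dt (Feps ε) (pd 3 (Feps ε)) q = Aux13.tm 0 0 0 0 0 0 q := by
    intro q hq
    rw [Aux13.Dt_tm (Feps ε) _ _ _ _ _ _ _ h3eq q hq]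
    simp [Aux13.tm]
  -- values at p, in terms of s = (p 4)^(1/3)
  have hs : (0:ℝ) < p 4 ^ ((1:ℝ)/3) := Real.rpow_pos_of_pos hp _
  set s : ℝ := p 4 ^ ((1:ℝ)/3) with hsdef
  set b : ℝ := p 5 with hbdef
  have v5 : pd 5 (Feps ε) p = 10/3 * b * (s^3)⁻¹ := by
    rw [h5eq p hp]; simp only [Aux13.tm]; rw [Aux13.E1 hp]; norm_num; rfl
  have v4 : pd 4 (Feps ε) p = -5/3 * b^2 * (s^6)⁻¹ + 5/3 * ε * s^2 := by
    rw [h4eq p hp]; simp only [Aux13.tm]; rw [Aux13.E2 hp, Aux13.E23 hp]; norm_num; rfl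
  have v3 : pd 3 (Feps ε) p = 0 := Aux13.pdlo_of hFeq hp 3 (by decide) (by decide)
  have v2 : pd 2 (Feps ε) p = 0 := Aux13.pdlo_of hFeq hp 2 (by decide) (by decide)
  have v1 : pd 1 (Feps ε) p = 0 := Aux13.pdlo_of hFeq hp 1 (by decide) (by decide)
  have vD4 : Dt (Feps ε) (pd 5 (Feps ε)) p = 20/9 * b^2 * (s^6)⁻¹ + 10/3 * ε * s^2 := by
    rw [hDF4eq p hp]; simp only [Aux13.tm]; rw [Aux13.E2 hp, Aux13.E23 hp]; norm_num; rfl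
  have vD3 : Dt (Feps ε) (pd 4 (Feps ε)) p
      = -20/9 * b^3 * (s^9)⁻¹ - 20/9 * ε * b * s⁻¹ := by
    rw [hDF3eq p hp]; simp only [Aux13.tm]; rw [Aux13.E3 hp, Aux13.Em13 hp]; ring
  have vD2 : Dt (Feps ε) (pd 3 (Feps ε)) p = 0 := by
    rw [hD3z p hp]; simp [Aux13.tm]
  have vDD4 : Dt (Feps ε) (Dt (Feps ε) (pd 5 (Feps ε))) p
      = 80/27 * b^3 * (s^9)⁻¹ + 20/3 * ε * b * s⁻¹ := by
    rw [Aux13.Dt_tm (Feps ε) _ _ _ _ _ _ _ hDF4eq p hp, hFeq p hp]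
    simp only [Aux13.tm]
    rw [Aux13.E21 hp, Aux13.E231 hp, Aux13.E1 hp, Aux13.E53 hp, Aux13.E2 hp,
      Aux13.E23 hp]
    field_simp
    ring
  have vDD3 : Dt (Feps ε) (Dt (Feps ε) (pd 4 (Feps ε))) p
      = -40/9 * b^4 * (s^12)⁻¹ - 260/27 * ε * b^2 * (s^4)⁻¹ - 20/9 * ε^2 * s^4 := by
    rw [Aux13.Dt_tm (Feps ε) _ _ _ _ _ _ _ hDF3eq p hp, hFeq p hp]
    simp only [Aux13.tm]
    rw [Aux13.E31 hp, Aux13.Em131 hp, Aux13.E1 hp, Aux13.E53 hp, Aux13.E3 hp,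
      Aux13.Em13 hp]
    field_simp
    ring
  have vDD2 : Dt (Feps ε) (Dt (Feps ε) (pd 3 (Feps ε))) p = 0 := by
    rw [Aux13.Dt_tm (Feps ε) _ _ _ _ _ _ _ hD3z p hp]
    norm_num
  refine ⟨?_, ?_, ?_⟩
  · show 50 * Dt (Feps ε) (Dt (Feps ε) (pd 5 (Feps ε))) p
        - 75 * Dt (Feps ε) (pd 4 (Feps ε)) p + 50 * pd 3 (Feps ε) p
        - 60 * pd 5 (Feps ε) p * Dt (Feps ε) (pd 5 (Feps ε)) p
        + 30 * pd 4 (Feps ε) p * pd 5 (Feps ε) p + 8 * (pd 5 (Feps ε) p) ^ 3 = 0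
    rw [vDD4, vD3, v3, v5, vD4, v4]
    field_simp
    ring
  · show 375 * Dt (Feps ε) (Dt (Feps ε) (pd 4 (Feps ε))) p
        - 1000 * Dt (Feps ε) (pd 3 (Feps ε)) p
        + 350 * (Dt (Feps ε) (pd 5 (Feps ε)) p) ^ 2 + 1250 * pd 2 (Feps ε) p
        - 650 * pd 4 (Feps ε) p * Dt (Feps ε) (pd 5 (Feps ε)) p
        + 200 * (pd 4 (Feps ε) p) ^ 2
        - 150 * pd 5 (Feps ε) p * Dt (Feps ε) (pd 4 (Feps ε)) p
        + 200 * pd 3 (Feps ε) p * pd 5 (Feps ε) p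
        - 140 * (pd 5 (Feps ε) p) ^ 2 * Dt (Feps ε) (pd 5 (Feps ε)) p
        + 130 * pd 4 (Feps ε) p * (pd 5 (Feps ε) p) ^ 2
        + 14 * (pd 5 (Feps ε) p) ^ 4 = 0
    rw [vDD3, vD2, vD4, v2, v4, v5, vD3, v3]
    field_simp
    ring
  · show 1250 * Dt (Feps ε) (Dt (Feps ε) (pd 3 (Feps ε))) p
        - 6250 * Dt (Feps ε) (pd 2 (Feps ε)) p
        + 1750 * Dt (Feps ε) (pd 4 (Feps ε)) p * Dt (Feps ε) (pd 5 (Feps ε)) p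
        - 2750 * pd 3 (Feps ε) p * Dt (Feps ε) (pd 5 (Feps ε)) p
        - 875 * pd 4 (Feps ε) p * Dt (Feps ε) (pd 4 (Feps ε)) p
        + 1250 * pd 3 (Feps ε) p * pd 4 (Feps ε) p
        - 500 * pd 5 (Feps ε) p * Dt (Feps ε) (pd 3 (Feps ε)) p
        + 700 * pd 5 (Feps ε) p * (Dt (Feps ε) (pd 5 (Feps ε)) p) ^ 2
        + 1250 * pd 2 (Feps ε) p * pd 5 (Feps ε) p
        - 1050 * pd 4 (Feps ε) p * pd 5 (Feps ε) p * Dt (Feps ε) (pd 5 (Feps ε)) p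
        + 350 * (pd 4 (Feps ε) p) ^ 2 * pd 5 (Feps ε) p
        - 350 * (pd 5 (Feps ε) p) ^ 2 * Dt (Feps ε) (pd 4 (Feps ε)) p
        + 550 * pd 3 (Feps ε) p * (pd 5 (Feps ε) p) ^ 2
        - 280 * (pd 5 (Feps ε) p) ^ 3 * Dt (Feps ε) (pd 5 (Feps ε)) p
        + 210 * pd 4 (Feps ε) p * (pd 5 (Feps ε) p) ^ 3 + 28 * (pd 5 (Feps ε) p) ^ 5
        + 18750 * pd 1 (Feps ε) p = 0
    have h2eq : ∀ q : Fin 6 → ℝ, 0 < q 4 →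
        pd 2 (Feps ε) q = Aux13.tm 0 0 0 0 0 0 q := by
      intro q hq
      rw [Aux13.pdlo_of hFeq hq 2 (by decide) (by decide)]
      simp [Aux13.tm]
    have vD1 : Dt (Feps ε) (pd 2 (Feps ε)) p = 0 := by
      rw [Aux13.Dt_tm (Feps ε) _ _ _ _ _ _ _ h2eq p hp]
      norm_num
    rw [vDD2, vD1, vD3, vD4, v3, v4, v5, vD2, v2, v1]
    field_simp
    ring
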